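/- Let C' be a finite subset of the open northern hemisphere {x ∈ S^d : x_{d+1} > 0}, let P_N be the central projection onto H_N = {x_{d+1} = 1}, and let ρ' ∈ (0, π/2). Then the Euclidean ball B(e_{d+1}, tan ρ') ⊆ H_N is contained in conv(P_N(C')) if and only if the spherical cap C(e_{d+1}, ρ') is contained in the spherical convex hull of C'. -/

import Mathlib

open Real Set
open scoped RealInnerProductSpace

noncomputable section

/-- Euclidean space `ℝ^n`. -/
abbrev E (n : ℕ) := EuclideanSpace ℝ (Fin n)

/-- The unit sphere `S^{n-1} ⊆ ℝ^n`. -/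
def unitSphere (n : ℕ) : Set (E n) := Metric.sphere 0 1

/-- The spherical cap with center `v` and spherical radius `ρ`. -/
def cap {n : ℕ} (v : E n) (ρ : ℝ) : Set (E n) := {u ∈ unitSphere n | Real.cos ρ ≤ ⟪u, v⟫}

/-- The last standard basis vector `e_{d+1}` of `ℝ^{d+1}`. -/
def eLast (d : ℕ) : E (d + 1) := EuclideanSpace.single (Fin.last d) 1

/-- Central projection from the origin onto the hyperplane `{x : x_{d+1} = 1}`,
identified with `ℝ^d` (with origin `e_{d+1}`). -/
def PN {d : ℕ} (x : E (d + 1)) : E d := WithLp.toLp 2 (fun i : Fin d => x i.castSucc / x (Fin.last d))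

/-- Points of the shorter great-circle arc between unit vectors `u` and `v`
(for `u`, `v` in an open hemisphere): normalized nonnegative combinations. -/
def arcPts {n : ℕ} (u v : E n) : Set (E n) :=
  {w | ∃ a b : ℝ, 0 ≤ a ∧ 0 ≤ b ∧ a • u + b • v ≠ 0 ∧ w = ‖a • u + b • v‖⁻¹ • (a • u + b • v)}

/-- A set `K ⊆ S^{n-1}` is spherically convex if it is the whole sphere, or it is
contained in an open hemisphere and contains the shorter arc between any two of its points. -/
def IsSphConvex {n : ℕ} (K : Set (E n)) : Prop :=
  K = unitSphere n ∨
    ((∃ v : E n, ∀ x ∈ K, 0 < ⟪x, v⟫) ∧ ∀ u ∈ K, ∀ w ∈ K, arcPts u w ⊆ K)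

/-- The spherical convex hull: the intersection of all spherically convex subsets
of the sphere containing `C`. -/
def sconv {n : ℕ} (C : Set (E n)) : Set (E n) :=
  ⋂₀ {K | IsSphConvex K ∧ K ⊆ unitSphere n ∧ C ⊆ K}

/-- The polar of a set `S ⊆ ℝ^n`. -/
def polar {n : ℕ} (S : Set (E n)) : Set (E n) := {x | ∀ s ∈ S, ⟪x, s⟫ ≤ 1}

end


lemma esum_apply {n : ℕ} {ι : Type*} (s : Finset ι) (f : ι → E n) (j : Fin n) :
    (∑ x ∈ s, f x) j = ∑ x ∈ s, f x j := by
  induction s using Finset.cons_induction with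
  | empty => simp
  | cons a s ha ih => simp [Finset.sum_cons, ih]

lemma smul_apply' {n : ℕ} (c : ℝ) (x : E n) (j : Fin n) : (c • x) j = c * x j := rfl

lemma inner_eLast {d : ℕ} (u : E (d+1)) : ⟪u, eLast d⟫ = u (Fin.last d) := by
  simp [eLast, EuclideanSpace.inner_single_right]

lemma mem_unitSphere {n : ℕ} {u : E n} : u ∈ unitSphere n ↔ ‖u‖ = 1 := by
  simp [unitSphere]

/-- the conic hull description -/
def coneHull {d : ℕ} (C' : Finset (E (d+1))) : Set (E (d+1)) :=
  {w | ∃ f : E (d+1) → ℝ, (∀ x ∈ C', 0 ≤ f x) ∧ (∑ x ∈ C', f x • x) ≠ 0 ∧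
    w = ‖∑ x ∈ C', f x • x‖⁻¹ • (∑ x ∈ C', f x • x)}

variable {d : ℕ} {C' : Finset (E (d+1))}

lemma normalize_mem_unitSphere {n : ℕ} {y : E n} (hy : y ≠ 0) :
    ‖y‖⁻¹ • y ∈ unitSphere n := by
  rw [mem_unitSphere, norm_smul, norm_inv, norm_norm, inv_mul_cancel₀ (norm_ne_zero_iff.2 hy)]

lemma coneHull_subset_sphere : coneHull C' ⊆ unitSphere (d+1) := by
  rintro w ⟨f, hf, hy, rfl⟩
  exact normalize_mem_unitSphere hy

lemma subset_coneHull (hC' : ∀ x ∈ C', x ∈ unitSphere (d + 1) ∧ 0 < x (Fin.last d)) :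
    (C' : Set (E (d+1))) ⊆ coneHull C' := by
  classical
  intro x hx
  rw [Finset.mem_coe] at hx
  have hx1 : ‖x‖ = 1 := mem_unitSphere.1 (hC' x hx).1
  refine ⟨fun z => if z = x then 1 else 0, fun z _ => by positivity, ?_⟩
  have hs : (∑ z ∈ C', (if z = x then (1:ℝ) else 0) • z) = x := by
    have : ∀ z ∈ C', (if z = x then (1:ℝ) else 0) • z = if z = x then z else 0 := by
      intro z _; split <;> simp
    rw [Finset.sum_congr rfl this, Finset.sum_ite_eq' C' x]
    simp [hx]
  rw [hs]
  refine ⟨fun h => by simp [h] at hx1, ?_⟩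
  rw [hx1]; simp

lemma lastCoord_pos (hC' : ∀ x ∈ C', x ∈ unitSphere (d + 1) ∧ 0 < x (Fin.last d))
    {f : E (d+1) → ℝ} (hf : ∀ x ∈ C', 0 ≤ f x) (hy : (∑ x ∈ C', f x • x) ≠ 0) :
    0 < (∑ x ∈ C', f x • x) (Fin.last d) := by
  rw [esum_apply]
  have hterm : ∀ x ∈ C', 0 ≤ (f x • x) (Fin.last d) := fun x hx => by
    rw [smul_apply']; exact mul_nonneg (hf x hx) (le_of_lt (hC' x hx).2)
  rcases (Finset.sum_nonneg hterm).lt_or_eq with h | h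
  · exact h
  · exfalso
    apply hy
    have hz : ∀ x ∈ C', (f x • x) (Fin.last d) = 0 :=
      (Finset.sum_eq_zero_iff_of_nonneg hterm).1 h.symm
    have hf0 : ∀ x ∈ C', f x = 0 := by
      intro x hx
      have := hz x hx
      rw [smul_apply'] at this
      rcases mul_eq_zero.1 this with h' | h'
      · exact h'
      · exact absurd h' (ne_of_gt (hC' x hx).2)
    exact Finset.sum_eq_zero fun x hx => by rw [hf0 x hx, zero_smul]

lemma isSphConvex_coneHull (hC' : ∀ x ∈ C', x ∈ unitSphere (d + 1) ∧ 0 < x (Fin.last d)) :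
    IsSphConvex (coneHull C') := by
  right
  constructor
  · refine ⟨eLast d, ?_⟩
    rintro w ⟨f, hf, hy, rfl⟩
    rw [inner_eLast, smul_apply']
    exact mul_pos (inv_pos.2 (norm_pos_iff.2 hy)) (lastCoord_pos hC' hf hy)
  · rintro u ⟨f, hf, hyf, rfl⟩ w ⟨g, hg, hyg, rfl⟩ z ⟨a, b, ha, hb, hz, rfl⟩
    set y1 := ∑ x ∈ C', f x • x
    set y2 := ∑ x ∈ C', g x • x
    refine ⟨fun x => a * ‖y1‖⁻¹ * f x + b * ‖y2‖⁻¹ * g x, ?_, ?_⟩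
    · intro x hx
      have := hf x hx; have := hg x hx
      positivity
    · have key : (∑ x ∈ C', (a * ‖y1‖⁻¹ * f x + b * ‖y2‖⁻¹ * g x) • x)
        = a • ‖y1‖⁻¹ • y1 + b • ‖y2‖⁻¹ • y2 := by
        rw [Finset.sum_congr rfl (fun x _ => add_smul (a * ‖y1‖⁻¹ * f x) (b * ‖y2‖⁻¹ * g x) x),
          Finset.sum_add_distrib]
        simp only [y1, y2, Finset.smul_sum, smul_smul, mul_assoc]
      rw [key]
      exact ⟨hz, rfl⟩

lemma normalize_mem_of_rep {K : Set (E (d+1))} (hK : IsSphConvex K)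
    (hKs : K ⊆ unitSphere (d+1)) (hCK : (C' : Set (E (d+1))) ⊆ K)
    (hC' : ∀ x ∈ C', x ∈ unitSphere (d + 1) ∧ 0 < x (Fin.last d)) :
    ∀ s : Finset (E (d+1)), s ⊆ C' → ∀ f : E (d+1) → ℝ, (∀ x ∈ s, 0 ≤ f x) →
      (∑ x ∈ s, f x • x) ≠ 0 → ‖∑ x ∈ s, f x • x‖⁻¹ • (∑ x ∈ s, f x • x) ∈ K := by
  rcases hK with hK | ⟨_, harc⟩
  · intro s _ f _ hy
    rw [hK]
    exact normalize_mem_unitSphere hy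
  intro s
  induction s using Finset.cons_induction with
  | empty => intro _ f _ hy; simp at hy
  | cons a s ha ih =>
    intro hsub f hf hy
    have haC : a ∈ C' := hsub (Finset.mem_cons_self a s)
    have hsC : s ⊆ C' := fun x hx => hsub (Finset.mem_cons.2 (Or.inr hx))
    have haK : a ∈ K := hCK (Finset.mem_coe.2 haC)
    have ha1 : ‖a‖ = 1 := mem_unitSphere.1 (hC' a haC).1
    rw [Finset.sum_cons] at hy ⊢
    set y' := ∑ x ∈ s, f x • x with hy'
    by_cases h0 : y' = 0
    · rw [h0, add_zero] at hy ⊢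
      have hfa : f a ≠ 0 := fun h => hy (by rw [h, zero_smul])
      have hfa' : 0 < f a := lt_of_le_of_ne (hf a (Finset.mem_cons_self a s)) (Ne.symm hfa)
      have : ‖f a • a‖⁻¹ • f a • a = a := by
        rw [norm_smul, ha1, mul_one, Real.norm_eq_abs, abs_of_pos hfa', smul_smul,
          inv_mul_cancel₀ hfa, one_smul]
      rw [this]; exact haK
    · have hw' : ‖y'‖⁻¹ • y' ∈ K :=
        ih hsC f (fun x hx => hf x (Finset.mem_cons.2 (Or.inr hx))) h0
      have harc' := harc a haK (‖y'‖⁻¹ • y') hw'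
      have hrep : f a • a + ‖y'‖ • (‖y'‖⁻¹ • y') = f a • a + y' := by
        rw [smul_smul, mul_inv_cancel₀ (norm_ne_zero_iff.2 h0), one_smul]
      apply harc'
      exact ⟨f a, ‖y'‖, hf a (Finset.mem_cons_self a s), norm_nonneg _, by rw [hrep]; exact hy,
        by rw [hrep]⟩

lemma sconv_eq (hC' : ∀ x ∈ C', x ∈ unitSphere (d + 1) ∧ 0 < x (Fin.last d)) :
    sconv (C' : Set (E (d+1))) = coneHull C' := by
  apply Set.Subset.antisymm
  · exact Set.sInter_subset_of_mem ⟨isSphConvex_coneHull hC', coneHull_subset_sphere,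
      subset_coneHull hC'⟩
  · rintro w ⟨f, hf, hy, rfl⟩
    intro K hKmem
    obtain ⟨hK, hKs, hCK⟩ := hKmem
    exact normalize_mem_of_rep hK hKs hCK hC' C' (fun _ h => h) f hf hy

lemma PN_apply {d : ℕ} (x : E (d+1)) (j : Fin d) :
    PN x j = x j.castSucc / x (Fin.last d) := rfl

lemma norm_sq_eq {n : ℕ} (u : E n) : ‖u‖^2 = ∑ i, u i ^2 := by
  rw [EuclideanSpace.norm_eq, Real.sq_sqrt (Finset.sum_nonneg fun i _ => sq_nonneg _)]
  simp [Real.norm_eq_abs, sq_abs]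

lemma PN_smul {d : ℕ} {c : ℝ} (hc : c ≠ 0) (x : E (d+1)) : PN (c • x) = PN x := by
  ext j
  simp only [PN_apply, smul_apply']
  rw [mul_div_mul_left _ _ hc]

lemma norm_PN_sq {u : E (d+1)} (hu : ‖u‖ = 1) (ht : u (Fin.last d) ≠ 0) :
    ‖PN u‖^2 = (1 - u (Fin.last d)^2) / u (Fin.last d)^2 := by
  have h1 : ∑ i, u i ^ 2 = 1 := by rw [← norm_sq_eq, hu]; norm_num
  rw [Fin.sum_univ_castSucc] at h1
  rw [norm_sq_eq]
  simp only [PN_apply, div_pow]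
  rw [← Finset.sum_div]
  have : ∑ j : Fin d, u j.castSucc ^ 2 = 1 - u (Fin.last d) ^ 2 := by linarith
  rw [this]

lemma cap_iff_ball_coord {u : E (d+1)} (hu : ‖u‖ = 1) (ht : 0 < u (Fin.last d))
    {ρ : ℝ} (hρ : ρ ∈ Set.Ioo 0 (π/2)) :
    Real.cos ρ ≤ u (Fin.last d) ↔ ‖PN u‖ ≤ Real.tan ρ := by
  set t := u (Fin.last d)
  have hcos : 0 < Real.cos ρ := Real.cos_pos_of_mem_Ioo ⟨by linarith [Real.pi_pos, hρ.1], hρ.2⟩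
  have hsin : 0 ≤ Real.sin ρ := Real.sin_nonneg_of_nonneg_of_le_pi (le_of_lt hρ.1)
    (by linarith [Real.pi_pos, hρ.2])
  have htan : 0 ≤ Real.tan ρ := Real.tan_nonneg_of_nonneg_of_le_pi_div_two (le_of_lt hρ.1)
    (le_of_lt hρ.2)
  have htansq : Real.tan ρ ^ 2 = (1 - Real.cos ρ ^ 2) / Real.cos ρ ^ 2 := by
    rw [Real.tan_eq_sin_div_cos, div_pow, Real.sin_sq]
  have hP2 := norm_PN_sq hu (ne_of_gt ht)
  have hnn := norm_nonneg (PN u)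
  constructor
  · intro h
    have hsq : ‖PN u‖^2 ≤ Real.tan ρ ^2 := by
      rw [hP2, htansq, div_le_div_iff₀ (by positivity) (by positivity)]
      nlinarith
    nlinarith
  · intro h
    have hsq : ‖PN u‖^2 ≤ Real.tan ρ ^2 := by nlinarith
    rw [hP2, htansq, div_le_div_iff₀ (by positivity) (by positivity)] at hsq
    nlinarith

lemma mem_coneHull_of_indexed {ι : Type} (t : Finset ι) (g : ι → ℝ) (z : ι → E (d+1))
    (hg : ∀ i ∈ t, 0 ≤ g i) (hz : ∀ i ∈ t, z i ∈ C')
    (hy : (∑ i ∈ t, g i • z i) ≠ 0) :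
    ‖∑ i ∈ t, g i • z i‖⁻¹ • (∑ i ∈ t, g i • z i) ∈ coneHull C' := by
  classical
  set f : E (d+1) → ℝ := fun x => ∑ i ∈ t.filter (fun i => z i = x), g i with hf
  have hsum : ∑ x ∈ C', f x • x = ∑ i ∈ t, g i • z i := by
    rw [← Finset.sum_fiberwise_of_maps_to hz (fun i => g i • z i)]
    apply Finset.sum_congr rfl
    intro x _
    rw [hf, Finset.sum_smul]
    apply Finset.sum_congr rfl
    intro i hi
    rw [(Finset.mem_filter.1 hi).2]
  refine ⟨f, fun x _ => Finset.sum_nonneg (fun i hi => hg i (Finset.mem_filter.1 hi).1), ?_, ?_⟩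
  · rw [hsum]; exact hy
  · rw [hsum]

lemma PN_mem_convexHull (hC' : ∀ x ∈ C', x ∈ unitSphere (d + 1) ∧ 0 < x (Fin.last d))
    {f : E (d+1) → ℝ} (hf : ∀ x ∈ C', 0 ≤ f x) (hy : (∑ x ∈ C', f x • x) ≠ 0) :
    PN (∑ x ∈ C', f x • x) ∈ convexHull ℝ (PN '' (C' : Set (E (d+1)))) := by
  set y := ∑ x ∈ C', f x • x with hydef
  have hyL : 0 < y (Fin.last d) := lastCoord_pos hC' hf hy
  have hsw : ∑ x ∈ C', f x * x (Fin.last d) = y (Fin.last d) := by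
    rw [hydef, esum_apply]
    exact Finset.sum_congr rfl fun x _ => rfl
  have hmem := Finset.centerMass_mem_convexHull (t := C')
    (w := fun x => f x * x (Fin.last d)) (z := PN) (s := PN '' (C' : Set (E (d+1))))
    (fun x hx => mul_nonneg (hf x hx) (le_of_lt (hC' x hx).2))
    (by rw [hsw]; exact hyL)
    (fun x hx => Set.mem_image_of_mem PN (Finset.mem_coe.2 hx))
  have heq : C'.centerMass (fun x => f x * x (Fin.last d)) PN = PN y := by
    rw [Finset.centerMass, hsw]
    ext j
    rw [smul_apply', esum_apply C' (fun i => (f i * i (Fin.last d)) • PN i), PN_apply]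
    have : ∀ x ∈ C', ((f x * x (Fin.last d)) • PN x) j = f x * x j.castSucc := by
      intro x hx
      rw [smul_apply', PN_apply, mul_div_assoc', mul_right_comm,
        mul_div_cancel_right₀ _ (ne_of_gt (hC' x hx).2)]
    rw [Finset.sum_congr rfl this]
    have hyj : y j.castSucc = ∑ x ∈ C', f x * x j.castSucc := by
      rw [hydef, esum_apply]
      exact Finset.sum_congr rfl fun x _ => rfl
    rw [← hyj, div_eq_inv_mul]
  rw [← heq]
  exact hmem

/-- For a finite set `C'` in the open northern hemisphere, the ball `B(e_{d+1}, tan ρ')`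
is in `conv (P_N(C'))` iff the cap `C(e_{d+1}, ρ')` is in the spherical convex hull of `C'`. -/
theorem ball_subset_iff_cap_subset (d : ℕ) (C' : Finset (E (d + 1)))
    (hC' : ∀ x ∈ C', x ∈ unitSphere (d + 1) ∧ 0 < x (Fin.last d))
    (ρ' : ℝ) (hρ' : ρ' ∈ Set.Ioo 0 (Real.pi / 2)) :
    Metric.closedBall (0 : E d) (Real.tan ρ') ⊆ convexHull ℝ (PN '' (C' : Set (E (d + 1)))) ↔
      cap (eLast d) ρ' ⊆ sconv (C' : Set (E (d + 1))) := by
  obtain ⟨hρ0, hρ2⟩ := hρ'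
  have hcos : 0 < Real.cos ρ' := Real.cos_pos_of_mem_Ioo ⟨by linarith [Real.pi_pos], hρ2⟩
  rw [sconv_eq hC']
  constructor
  · intro hball u hu
    obtain ⟨husph, hinner⟩ := hu
    rw [inner_eLast] at hinner
    have hu1 : ‖u‖ = 1 := mem_unitSphere.1 husph
    have huL : 0 < u (Fin.last d) := lt_of_lt_of_le hcos hinner
    have hPNu : PN u ∈ Metric.closedBall (0 : E d) (Real.tan ρ') := by
      rw [Metric.mem_closedBall, dist_zero_right]
      exact (cap_iff_ball_coord hu1 huL ⟨hρ0, hρ2⟩).1 hinner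
    have hconv := hball hPNu
    rw [_root_.convexHull_eq] at hconv
    obtain ⟨ι, t, w, z, hw0, hw1, hzs, hcm⟩ := hconv
    have hcm' : ∑ i ∈ t, w i • z i = PN u := by
      rw [← Finset.centerMass_eq_of_sum_1 _ _ hw1]; exact hcm
    have hzchoice : ∀ i : {i // i ∈ t}, ∃ x, x ∈ C' ∧ PN x = z i.1 := by
      intro i
      obtain ⟨x, hx, hPx⟩ := hzs i.1 i.2
      exact ⟨x, Finset.mem_coe.1 hx, hPx⟩
    choose z' hz'C hz'P using hzchoice
    set g : {i // i ∈ t} → ℝ := fun i => w i.1 / z' i (Fin.last d) with hg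
    set y : E (d+1) := ∑ i ∈ t.attach, g i • z' i with hydef
    have hz'L : ∀ i : {i // i ∈ t}, 0 < z' i (Fin.last d) := fun i => (hC' _ (hz'C i)).2
    have hyL : y (Fin.last d) = 1 := by
      rw [hydef, esum_apply]
      have h : ∀ i ∈ t.attach, (g i • z' i) (Fin.last d) = w i.1 := by
        intro i _
        rw [smul_apply', hg]
        exact div_mul_cancel₀ _ (ne_of_gt (hz'L i))
      rw [Finset.sum_congr rfl h, Finset.sum_attach t w, hw1]
    have hyne : y ≠ 0 := by
      intro h
      rw [h] at hyL
      simp at hyL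
    have hmem := mem_coneHull_of_indexed t.attach g z'
      (fun i _ => div_nonneg (hw0 i.1 i.2) (le_of_lt (hz'L i)))
      (fun i _ => hz'C i) (by rw [← hydef]; exact hyne)
    rw [← hydef] at hmem
    have hyu : y = (u (Fin.last d))⁻¹ • u := by
      ext j
      rw [smul_apply']
      induction j using Fin.lastCases with
      | last => rw [hyL, inv_mul_cancel₀ (ne_of_gt huL)]
      | cast j =>
        have h1 : y j.castSucc = ∑ i ∈ t.attach, w i.1 * z i.1 j := by
          rw [hydef, esum_apply]
          apply Finset.sum_congr rfl
          intro i _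
          rw [smul_apply', hg]
          have hj : z' i j.castSucc = z (↑i) j * z' i (Fin.last d) := by
            rw [← hz'P i, PN_apply, div_mul_cancel₀ _ (ne_of_gt (hz'L i))]
          rw [hj]
          have hc := ne_of_gt (hz'L i)
          field_simp
        have h2 : ∑ i ∈ t, w i * z i j = PN u j := by
          rw [← hcm', esum_apply]
          exact Finset.sum_congr rfl fun i _ => rfl
        rw [h1, Finset.sum_attach t (fun i => w i * z i j), h2, PN_apply, div_eq_inv_mul]
    have hfin : ‖y‖⁻¹ • y = u := by
      rw [hyu, norm_smul, hu1, mul_one, Real.norm_eq_abs, abs_of_pos (inv_pos.2 huL),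
        inv_inv, smul_smul, mul_inv_cancel₀ (ne_of_gt huL), one_smul]
    rw [← hfin]
    exact hmem
  · intro hcap p hp
    rw [Metric.mem_closedBall, dist_zero_right] at hp
    have htan : 0 ≤ Real.tan ρ' := Real.tan_nonneg_of_nonneg_of_le_pi_div_two (le_of_lt hρ0)
      (le_of_lt hρ2)
    set v : E (d+1) := WithLp.toLp 2 (fun i => Fin.lastCases (motive := fun _ => ℝ) 1 (fun j => p j) i)
      with hvdef
    have hvL : v (Fin.last d) = 1 := by rw [hvdef]; simp
    have hvcs : ∀ j : Fin d, v j.castSucc = p j := fun j => by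
      rw [hvdef]; simp
    have hvne : v ≠ 0 := by
      intro h
      rw [h] at hvL
      simp at hvL
    have hnv : 0 < ‖v‖ := norm_pos_iff.2 hvne
    have hnv2 : ‖v‖^2 = ‖p‖^2 + 1 := by
      rw [norm_sq_eq, norm_sq_eq, Fin.sum_univ_castSucc, hvL]
      rw [Finset.sum_congr rfl (fun j _ => by rw [hvcs j])]
      norm_num
    set u := ‖v‖⁻¹ • v with hudef
    have huL : u (Fin.last d) = ‖v‖⁻¹ := by rw [hudef, smul_apply', hvL, mul_one]
    have hid : Real.tan ρ' ^ 2 + 1 = 1 / Real.cos ρ' ^ 2 := by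
      rw [Real.tan_eq_sin_div_cos, div_pow, Real.sin_sq]
      field_simp
      ring
    have hv2le : ‖v‖^2 ≤ 1 / Real.cos ρ' ^2 := by rw [hnv2, ← hid]; nlinarith [norm_nonneg p]
    have hcosle : Real.cos ρ' ≤ u (Fin.last d) := by
      have h1 : (Real.cos ρ' * ‖v‖)^2 ≤ 1 := by
        have h2 := mul_le_mul_of_nonneg_left hv2le (le_of_lt (pow_pos hcos 2))
        rw [mul_one_div, div_self (ne_of_gt (pow_pos hcos 2))] at h2
        nlinarith [h2]
      rw [huL, inv_eq_one_div, le_div_iff₀ hnv]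
      nlinarith [h1, mul_pos hcos hnv]
    have hucap : u ∈ cap (eLast d) ρ' :=
      ⟨normalize_mem_unitSphere hvne, by rw [inner_eLast]; exact hcosle⟩
    obtain ⟨f, hf, hy, hurep⟩ := hcap hucap
    have hPNmem := PN_mem_convexHull hC' hf hy
    have hPNy : PN (∑ x ∈ C', f x • x) = p := by
      set y := ∑ x ∈ C', f x • x with hydef
      have hyy : y = ‖y‖ • u := by
        rw [hurep, smul_smul, mul_inv_cancel₀ (norm_ne_zero_iff.2 hy), one_smul]
      rw [hyy, PN_smul (norm_ne_zero_iff.2 hy), hudef,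
        PN_smul (inv_ne_zero (ne_of_gt hnv))]
      ext j
      rw [PN_apply, hvL, hvcs j, div_one]
    rw [hPNy] at hPNmem
    exact hPNmem
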